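/- For μ > 0 and ξ ∈ ℝ, let z_μ have density (2K_0(μ))^{-1} e^{-μ cosh y} on ℝ, and let λ ∈ [0, |ξ|]. Then E[ exp(−λ e^{z_μ} − (ξ²/(2μ)) e^{z_μ}) ] = E[ exp(−λ cosh z_μ) cos(√(ξ² − λ²) sinh z_μ) ]. -/

import Mathlib

open MeasureTheory Real Set Filter Topology NNReal ENNReal

/-- The Macdonald function of order zero, via its integral representation. -/
noncomputable def K0 (a : ℝ) : ℝ := (1 / 2) * ∫ x : ℝ, Real.exp (-a * Real.cosh x)


/-- cosh dominates a quadratic. -/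
lemma sq_le_cosh' (t : ℝ) : t ^ 2 / 8 ≤ Real.cosh t := by
  have h1 : Real.cosh t = Real.cosh |t| := (Real.cosh_abs t).symm
  have h2 : Real.exp |t| / 2 ≤ Real.cosh |t| := by
    rw [Real.cosh_eq]
    have := Real.exp_pos (-|t|)
    linarith
  have h3 : t ^ 2 / 4 ≤ Real.exp |t| := by
    have : Real.exp |t| = (Real.exp (|t| / 2)) ^ 2 := by
      rw [← Real.exp_nat_mul]; congr 1; push_cast; ring
    rw [this]
    have h4 : |t| / 2 ≤ Real.exp (|t| / 2) := (Real.add_one_le_exp _).trans' (by linarith [abs_nonneg t])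
    have h5 : (0:ℝ) ≤ |t| / 2 := by positivity
    calc t ^ 2 / 4 = (|t| / 2) ^ 2 := by rw [div_pow, sq_abs]; ring
      _ ≤ (Real.exp (|t| / 2)) ^ 2 := by gcongr
  nlinarith [h2, h3, h1]

lemma integrable_exp_neg_mul_cosh {k : ℝ} (hk : 0 < k) :
    Integrable (fun y : ℝ => Real.exp (-(k * Real.cosh y))) := by
  have hg : Integrable (fun y : ℝ => Real.exp (-(k/8) * y ^ 2)) :=
    integrable_exp_neg_mul_sq (by positivity)
  refine hg.mono' ?_ ?_
  · exact (Real.continuous_exp.comp (continuous_const.mul Real.continuous_cosh).neg).aestronglyMeasurable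
  · refine Filter.Eventually.of_forall fun y => ?_
    rw [Real.norm_eq_abs, abs_of_pos (Real.exp_pos _)]
    apply Real.exp_le_exp.2
    have := sq_le_cosh' y
    nlinarith

lemma integrable_cosh_mul_exp_neg_mul_cosh {k : ℝ} (hk : 0 < k) :
    Integrable (fun y : ℝ => Real.cosh y * Real.exp (-(k * Real.cosh y))) := by
  have hg : Integrable (fun y : ℝ => (2/k) * Real.exp (-(k/2 * Real.cosh y))) :=
    (integrable_exp_neg_mul_cosh (by positivity)).const_mul _
  refine hg.mono' ?_ ?_
  · exact ((Real.continuous_cosh).mul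
      (Real.continuous_exp.comp (continuous_const.mul Real.continuous_cosh).neg)).aestronglyMeasurable
  · refine Filter.Eventually.of_forall fun y => ?_
    have hc : (0:ℝ) < Real.cosh y := Real.cosh_pos y
    rw [Real.norm_eq_abs, abs_of_pos (by positivity)]
    have h4 : k/2 * Real.cosh y ≤ Real.exp (k/2 * Real.cosh y) :=
      (Real.add_one_le_exp _).trans' (by linarith)
    have h5 : Real.cosh y ≤ (2/k) * Real.exp (k/2 * Real.cosh y) := by
      have : (2/k) * (k/2 * Real.cosh y) ≤ (2/k) * Real.exp (k/2 * Real.cosh y) := by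
        apply mul_le_mul_of_nonneg_left h4 (by positivity)
      calc Real.cosh y = (2/k) * (k/2 * Real.cosh y) := by field_simp
        _ ≤ _ := this
    calc Real.cosh y * Real.exp (-(k * Real.cosh y))
        ≤ (2/k) * Real.exp (k/2 * Real.cosh y) * Real.exp (-(k * Real.cosh y)) := by
          apply mul_le_mul_of_nonneg_right h5 (Real.exp_pos _).le
      _ = (2/k) * Real.exp (-(k/2 * Real.cosh y)) := by
          rw [mul_assoc, ← Real.exp_add]; ring_nf


lemma translation_lemma {c d : ℝ} (hc : 0 < c) (hd : 0 < d) :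
    ∫ y : ℝ, Real.exp (-(c * Real.exp y + d * Real.exp (-y)))
      = ∫ y : ℝ, Real.exp (-(2 * Real.sqrt (c * d) * Real.cosh y)) := by
  have key := MeasureTheory.integral_add_right_eq_self
    (μ := volume) (fun y : ℝ => Real.exp (-(c * Real.exp y + d * Real.exp (-y))))
    (Real.log (Real.sqrt (d / c)))
  rw [← key]
  congr 1
  funext y
  have hsq : (0:ℝ) < Real.sqrt (d / c) := Real.sqrt_pos.2 (by positivity)
  have hexp : Real.exp (Real.log (Real.sqrt (d / c))) = Real.sqrt (d / c) :=
    Real.exp_log hsq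
  have h1 : c * Real.sqrt (d / c) = Real.sqrt (c * d) := by
    rw [show c * Real.sqrt (d / c) = Real.sqrt (c^2) * Real.sqrt (d / c) by
        rw [Real.sqrt_sq hc.le],
      ← Real.sqrt_mul (by positivity)]
    congr 1; field_simp
  have h2 : d * (Real.sqrt (d / c))⁻¹ = Real.sqrt (c * d) := by
    rw [show (Real.sqrt (d / c))⁻¹ = Real.sqrt (c / d) by
        rw [← Real.sqrt_inv]; congr 1; field_simp,
      show d * Real.sqrt (c / d) = Real.sqrt (d^2) * Real.sqrt (c / d) by
        rw [Real.sqrt_sq hd.le],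
      ← Real.sqrt_mul (by positivity)]
    congr 1; field_simp
  have harg : c * Real.exp (y + Real.log (Real.sqrt (d / c)))
      + d * Real.exp (-(y + Real.log (Real.sqrt (d / c))))
      = 2 * Real.sqrt (c * d) * Real.cosh y := by
    rw [Real.exp_add, neg_add, Real.exp_add, Real.exp_neg (Real.log _), hexp, Real.cosh_eq]
    have e1 : c * (Real.exp y * Real.sqrt (d / c)) = Real.sqrt (c * d) * Real.exp y := by
      rw [← mul_assoc, mul_comm c (Real.exp y), mul_assoc, h1]; ring
    have e2 : d * (Real.exp (-y) * (Real.sqrt (d / c))⁻¹)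
        = Real.sqrt (c * d) * Real.exp (-y) := by
      rw [← mul_assoc, mul_comm d (Real.exp (-y)), mul_assoc, h2]; ring
    rw [e1, e2]; ring
  rw [harg]

lemma abs_sinh_le_cosh (y : ℝ) : |Real.sinh y| ≤ Real.cosh y := by
  have h := Real.cosh_sq y
  have h2 := Real.cosh_pos y
  rw [abs_le]
  constructor <;> nlinarith

noncomputable def Fc (R θ y : ℝ) : ℂ :=
  Complex.exp (-(R : ℂ) * Complex.cosh ((y : ℂ) + (θ : ℂ) * Complex.I))

lemma cosh_add_mul_I (y θ : ℝ) :
    Complex.cosh ((y : ℂ) + (θ : ℂ) * Complex.I)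
      = (Real.cosh y * Real.cos θ : ℝ) + (Real.sinh y * Real.sin θ : ℝ) * Complex.I := by
  rw [Complex.cosh_add, Complex.cosh_mul_I, Complex.sinh_mul_I]
  push_cast [Complex.ofReal_cosh, Complex.ofReal_sinh]
  ring

lemma sinh_add_mul_I (y θ : ℝ) :
    Complex.sinh ((y : ℂ) + (θ : ℂ) * Complex.I)
      = (Real.sinh y * Real.cos θ : ℝ) + (Real.cosh y * Real.sin θ : ℝ) * Complex.I := by
  rw [Complex.sinh_add, Complex.cosh_mul_I, Complex.sinh_mul_I]
  push_cast [Complex.ofReal_cosh, Complex.ofReal_sinh]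
  ring

lemma norm_Fc (R θ y : ℝ) :
    ‖Fc R θ y‖ = Real.exp (-(R * (Real.cosh y * Real.cos θ))) := by
  rw [Fc, Complex.norm_exp]
  congr 1
  rw [cosh_add_mul_I]
  simp only [Complex.neg_re, Complex.neg_im, Complex.mul_re, Complex.ofReal_re, Complex.ofReal_im,
    Complex.add_re, Complex.add_im, Complex.mul_im, Complex.I_re, Complex.I_im]
  ring

lemma norm_sinh_le (y θ : ℝ) :
    ‖Complex.sinh ((y : ℂ) + (θ : ℂ) * Complex.I)‖ ≤ 2 * Real.cosh y := by
  rw [sinh_add_mul_I]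
  refine (Complex.norm_le_abs_re_add_abs_im _).trans ?_
  simp only [Complex.add_re, Complex.ofReal_re, Complex.mul_re, Complex.I_re, Complex.I_im,
    Complex.ofReal_im, Complex.add_im, Complex.mul_im]
  have h1 : |Real.sinh y * Real.cos θ| ≤ Real.cosh y := by
    rw [abs_mul]
    calc |Real.sinh y| * |Real.cos θ| ≤ Real.cosh y * 1 := by
          apply mul_le_mul (abs_sinh_le_cosh y) (Real.abs_cos_le_one θ) (abs_nonneg _)
            (Real.cosh_pos y).le
      _ = Real.cosh y := mul_one _
  have h2 : |Real.cosh y * Real.sin θ| ≤ Real.cosh y := by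
    rw [abs_mul, abs_of_pos (Real.cosh_pos y)]
    calc Real.cosh y * |Real.sin θ| ≤ Real.cosh y * 1 := by
          apply mul_le_mul_of_nonneg_left (Real.abs_sin_le_one θ) (Real.cosh_pos y).le
      _ = Real.cosh y := mul_one _
  have e1 : (Real.sinh y * Real.cos θ + (Real.cosh y * Real.sin θ * 0 - 0 * 1)) = Real.sinh y * Real.cos θ := by ring
  have e2 : (0 + (Real.cosh y * Real.sin θ * 1 + 0 * 0)) = Real.cosh y * Real.sin θ := by ring
  rw [e1, e2]
  linarith

lemma hasDerivAt_Fc_theta (R y θ : ℝ) :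
    HasDerivAt (fun x : ℝ => Fc R x y)
      (Fc R θ y * (-(R : ℂ) * (Complex.sinh ((y : ℂ) + (θ : ℂ) * Complex.I) * Complex.I))) θ := by
  have h0 : HasDerivAt (fun w : ℂ => (y : ℂ) + w * Complex.I) Complex.I (θ : ℂ) := by
    simpa using ((hasDerivAt_id (θ : ℂ)).mul_const Complex.I).const_add (y : ℂ)
  have h1 : HasDerivAt (fun w : ℂ => Complex.cosh ((y : ℂ) + w * Complex.I))
      (Complex.sinh ((y : ℂ) + (θ : ℂ) * Complex.I) * Complex.I) (θ : ℂ) :=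
    (Complex.hasDerivAt_cosh _).comp _ h0
  have h2 : HasDerivAt (fun w : ℂ => -(R : ℂ) * Complex.cosh ((y : ℂ) + w * Complex.I))
      (-(R : ℂ) * (Complex.sinh ((y : ℂ) + (θ : ℂ) * Complex.I) * Complex.I)) (θ : ℂ) :=
    h1.const_mul _
  have h3 := h2.cexp
  exact h3.comp_ofReal

lemma hasDerivAt_Fc_y (R θ y : ℝ) :
    HasDerivAt (fun x : ℝ => Fc R θ x)
      (Fc R θ y * (-(R : ℂ) * Complex.sinh ((y : ℂ) + (θ : ℂ) * Complex.I))) y := by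
  have h0 : HasDerivAt (fun w : ℂ => w + (θ : ℂ) * Complex.I) 1 (y : ℂ) := by
    simpa using (hasDerivAt_id ((y : ℂ))).add_const ((θ : ℂ) * Complex.I)
  have h1 : HasDerivAt (fun w : ℂ => Complex.cosh (w + (θ : ℂ) * Complex.I))
      (Complex.sinh ((y : ℂ) + (θ : ℂ) * Complex.I)) (y : ℂ) := by
    have := (Complex.hasDerivAt_cosh _).comp (y : ℂ) h0
    rwa [mul_one] at this
  have h2 : HasDerivAt (fun w : ℂ => -(R : ℂ) * Complex.cosh (w + (θ : ℂ) * Complex.I))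
      (-(R : ℂ) * Complex.sinh ((y : ℂ) + (θ : ℂ) * Complex.I)) (y : ℂ) := h1.const_mul _
  exact h2.cexp.comp_ofReal

lemma continuous_Fc (R θ : ℝ) : Continuous (fun y : ℝ => Fc R θ y) := by
  unfold Fc
  fun_prop

lemma norm_Fc_mul_sinh_le {R θ : ℝ} (hR : 0 < R) (y : ℝ) :
    ‖Fc R θ y * (-(R : ℂ) * Complex.sinh ((y : ℂ) + (θ : ℂ) * Complex.I))‖
      ≤ 2 * R * (Real.cosh y * Real.exp (-(R * Real.cos θ * Real.cosh y))) := by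
  rw [norm_mul, norm_mul, norm_neg, Complex.norm_real, Real.norm_eq_abs, abs_of_pos hR, norm_Fc]
  have h1 := norm_sinh_le y θ
  have h2 : Real.exp (-(R * (Real.cosh y * Real.cos θ)))
      = Real.exp (-(R * Real.cos θ * Real.cosh y)) := by ring_nf
  rw [h2]
  have hc := (Real.cosh_pos y).le
  have he := (Real.exp_pos (-(R * Real.cos θ * Real.cosh y))).le
  calc Real.exp (-(R * Real.cos θ * Real.cosh y)) * (R * ‖Complex.sinh ((y : ℂ) + (θ : ℂ) * Complex.I)‖)
      ≤ Real.exp (-(R * Real.cos θ * Real.cosh y)) * (R * (2 * Real.cosh y)) := by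
        apply mul_le_mul_of_nonneg_left (mul_le_mul_of_nonneg_left h1 hR.le) he
    _ = 2 * R * (Real.cosh y * Real.exp (-(R * Real.cos θ * Real.cosh y))) := by ring

lemma integrable_Fc {R θ : ℝ} (hR : 0 < R) (hθ : 0 < Real.cos θ) :
    Integrable (fun y : ℝ => Fc R θ y) := by
  refine ((integrable_exp_neg_mul_cosh (k := R * Real.cos θ) (by positivity)).mono'
    (continuous_Fc R θ).aestronglyMeasurable ?_)
  refine Filter.Eventually.of_forall fun y => ?_
  rw [norm_Fc]
  apply le_of_eq
  ring_nf

lemma integrable_Fc_deriv {R θ : ℝ} (hR : 0 < R) (hθ : 0 < Real.cos θ) :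
    Integrable (fun y : ℝ =>
      Fc R θ y * (-(R : ℂ) * Complex.sinh ((y : ℂ) + (θ : ℂ) * Complex.I))) := by
  have hbi : Integrable (fun y : ℝ =>
      (2 * R) * (Real.cosh y * Real.exp (-(R * Real.cos θ * Real.cosh y)))) :=
    (integrable_cosh_mul_exp_neg_mul_cosh (by positivity)).const_mul _
  refine hbi.mono' ?_ (Filter.Eventually.of_forall fun y => ?_)
  · apply Continuous.aestronglyMeasurable
    apply (continuous_Fc R θ).mul
    fun_prop
  · simpa [mul_assoc] using norm_Fc_mul_sinh_le hR y

lemma tendsto_cosh_atTop' : Tendsto Real.cosh atTop atTop := by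
  apply tendsto_atTop_mono (fun T => ?_) (Real.tendsto_exp_atTop.atTop_div_const two_pos)
  rw [Real.cosh_eq]
  have := (Real.exp_pos (-T)).le
  have : Real.exp T / 2 ≤ (Real.exp T + Real.exp (-T)) / 2 := by linarith
  linarith

lemma integral_Fc_y_deriv_zero {R θ : ℝ} (hR : 0 < R) (hθ : 0 < Real.cos θ) :
    ∫ y : ℝ, Fc R θ y * (-(R : ℂ) * Complex.sinh ((y : ℂ) + (θ : ℂ) * Complex.I)) = 0 := by
  set g' : ℝ → ℂ :=
    fun y => Fc R θ y * (-(R : ℂ) * Complex.sinh ((y : ℂ) + (θ : ℂ) * Complex.I)) with hg'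
  have hint : Integrable g' := integrable_Fc_deriv hR hθ
  have htendsto : Tendsto (fun T : ℝ => ∫ y in (-T)..T, g' y) atTop (𝓝 (∫ y : ℝ, g' y)) :=
    MeasureTheory.intervalIntegral_tendsto_integral hint tendsto_neg_atTop_atBot tendsto_id
  have heval : ∀ T : ℝ, (∫ y in (-T)..T, g' y) = Fc R θ T - Fc R θ (-T) := by
    intro T
    apply intervalIntegral.integral_eq_sub_of_hasDerivAt
    · intro x _
      exact hasDerivAt_Fc_y R θ x
    · exact hint.intervalIntegrable
  have hlim : Tendsto (fun T : ℝ => Fc R θ T - Fc R θ (-T)) atTop (𝓝 0) := by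
    refine squeeze_zero_norm (a := fun T => 2 * Real.exp (-(R * Real.cos θ * Real.cosh T)))
      (fun T => ?_) ?_
    · calc ‖Fc R θ T - Fc R θ (-T)‖ ≤ ‖Fc R θ T‖ + ‖Fc R θ (-T)‖ := norm_sub_le _ _
        _ = 2 * Real.exp (-(R * Real.cos θ * Real.cosh T)) := by
            rw [norm_Fc, norm_Fc, Real.cosh_neg]; ring_nf
    · have h1 : Tendsto (fun T : ℝ => R * Real.cos θ * Real.cosh T) atTop atTop :=
        (tendsto_cosh_atTop'.const_mul_atTop (by positivity))
      have h2 := Real.tendsto_exp_neg_atTop_nhds_zero.comp h1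
      have := h2.const_mul (2 : ℝ)
      simpa [Function.comp] using this
  have hz : Tendsto (fun T : ℝ => ∫ y in (-T)..T, g' y) atTop (𝓝 0) :=
    Tendsto.congr (fun T => (heval T).symm) hlim
  exact tendsto_nhds_unique htendsto hz

lemma hasDerivAt_Ic {R : ℝ} (hR : 0 < R) {θ : ℝ} (hθ : θ ∈ Ioo (-(π/2)) (π/2)) :
    HasDerivAt (fun x : ℝ => ∫ y : ℝ, Fc R x y) 0 θ := by
  obtain ⟨hθ1, hθ2⟩ := hθ
  have habs : |θ| < π/2 := abs_lt.2 ⟨by linarith, hθ2⟩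
  set ε := (π/2 - |θ|)/2 with hε
  have hεpos : 0 < ε := by simp only [hε]; linarith
  set c := Real.cos (|θ| + ε) with hc
  have hlt : |θ| + ε < π/2 := by simp only [hε]; linarith
  have hcpos : 0 < c :=
    Real.cos_pos_of_mem_Ioo ⟨by linarith [abs_nonneg θ, Real.pi_pos], hlt⟩
  have hcosθpos : 0 < Real.cos θ := Real.cos_pos_of_mem_Ioo ⟨hθ1, hθ2⟩
  have hcosx : ∀ x ∈ Metric.ball θ ε, c ≤ Real.cos x := by
    intro x hx
    rw [Metric.mem_ball, Real.dist_eq] at hx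
    have h1 : |x| ≤ |θ| + ε := by
      have h2 := abs_sub_abs_le_abs_sub x θ
      linarith [le_of_lt hx]
    calc c ≤ Real.cos |x| := Real.cos_le_cos_of_nonneg_of_le_pi (abs_nonneg x)
          (by linarith [Real.pi_pos]) h1
      _ = Real.cos x := Real.cos_abs x
  have key := hasDerivAt_integral_of_dominated_loc_of_deriv_le (μ := volume)
    (F := fun x y => Fc R x y)
    (F' := fun x (y : ℝ) => Fc R x y *
      (-(R : ℂ) * (Complex.sinh ((y : ℂ) + (x : ℂ) * Complex.I) * Complex.I)))
    (x₀ := θ) (s := Metric.ball θ ε)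
    (bound := fun y => 2 * R * (Real.cosh y * Real.exp (-(R * c * Real.cosh y))))
    (Metric.ball_mem_nhds θ hεpos)
    (Filter.Eventually.of_forall fun x => (continuous_Fc R x).aestronglyMeasurable)
    (integrable_Fc hR hcosθpos)
    (by apply Continuous.aestronglyMeasurable; apply (continuous_Fc R θ).mul; fun_prop)
    (Filter.Eventually.of_forall fun y => by
      intro x hx
      have he : Fc R x y * (-(R : ℂ) * (Complex.sinh ((y : ℂ) + (x : ℂ) * Complex.I) * Complex.I))
          = (Fc R x y * (-(R : ℂ) * Complex.sinh ((y : ℂ) + (x : ℂ) * Complex.I))) * Complex.I := by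
        ring
      rw [he, norm_mul, Complex.norm_I, mul_one]
      refine (norm_Fc_mul_sinh_le hR y).trans ?_
      have hcy := (Real.cosh_pos y).le
      have hcx := hcosx x hx
      gcongr)
    ((integrable_cosh_mul_exp_neg_mul_cosh (k := R * c) (by positivity)).const_mul _)
    (Filter.Eventually.of_forall fun y x _ => hasDerivAt_Fc_theta R y x)
  have hzero : (∫ y : ℝ, Fc R θ y *
      (-(R : ℂ) * (Complex.sinh ((y : ℂ) + (θ : ℂ) * Complex.I) * Complex.I))) = 0 := by
    have he : ∀ y : ℝ, Fc R θ y *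
        (-(R : ℂ) * (Complex.sinh ((y : ℂ) + (θ : ℂ) * Complex.I) * Complex.I))
        = (Fc R θ y * (-(R : ℂ) * Complex.sinh ((y : ℂ) + (θ : ℂ) * Complex.I))) * Complex.I :=
      fun y => by ring
    simp_rw [he]
    rw [MeasureTheory.integral_mul_const, integral_Fc_y_deriv_zero hR hcosθpos, zero_mul]
  have h2 := key.2
  rwa [hzero] at h2

lemma Ic_const {R : ℝ} (hR : 0 < R) {θ₀ : ℝ} (h0 : 0 ≤ θ₀) (h1 : θ₀ < π/2) :
    (∫ y : ℝ, Fc R θ₀ y) = ∫ y : ℝ, Fc R 0 y := by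
  have hmem : ∀ x ∈ Icc (0:ℝ) θ₀, x ∈ Ioo (-(π/2)) (π/2) := by
    intro x hx
    exact ⟨by linarith [hx.1, Real.pi_pos], by linarith [hx.2]⟩
  have := constant_of_has_deriv_right_zero
    (f := fun x : ℝ => ∫ y : ℝ, Fc R x y) (a := 0) (b := θ₀)
    (fun x hx => ((hasDerivAt_Ic hR (hmem x hx)).continuousAt).continuousWithinAt)
    (fun x hx => (hasDerivAt_Ic hR (hmem x (Ico_subset_Icc_self hx))).hasDerivWithinAt)
    θ₀ ⟨h0, le_refl _⟩
  exact this

lemma rotation_lemma {A β : ℝ} (hA : 0 < A) (hβ : 0 ≤ β) :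
    ∫ y : ℝ, Real.exp (-(A * Real.cosh y)) * Real.cos (β * Real.sinh y)
      = ∫ y : ℝ, Real.exp (-(Real.sqrt (A^2 + β^2) * Real.cosh y)) := by
  set R := Real.sqrt (A^2 + β^2) with hRdef
  have hR2 : R^2 = A^2 + β^2 := Real.sq_sqrt (by positivity)
  have hR : 0 < R := Real.sqrt_pos.2 (by positivity)
  have hAR : A ≤ R := by nlinarith
  set θ₀ := Real.arccos (A/R) with hθ₀
  have hARd : 0 < A/R := by positivity
  have hcos : Real.cos θ₀ = A/R :=
    Real.cos_arccos (by linarith) ((div_le_one hR).2 hAR)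
  have hsin : Real.sin θ₀ = β/R := by
    rw [hθ₀, Real.sin_arccos]
    have he : 1 - (A/R)^2 = (β/R)^2 := by
      field_simp
      nlinarith
    rw [he, Real.sqrt_sq (by positivity)]
  have h0 : 0 ≤ θ₀ := Real.arccos_nonneg _
  have h1 : θ₀ < π/2 := Real.arccos_lt_pi_div_two.2 hARd
  have hconst := Ic_const hR h0 h1
  have hI0 : (∫ y : ℝ, Fc R 0 y) = ((∫ y : ℝ, Real.exp (-(R * Real.cosh y)) : ℝ) : ℂ) := by
    have he : (fun y : ℝ => Fc R 0 y)
        = fun y : ℝ => ((Real.exp (-(R * Real.cosh y)) : ℝ) : ℂ) := by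
      funext y
      rw [Fc]
      push_cast [Complex.ofReal_exp, Complex.ofReal_cosh]
      norm_num
    rw [he]
    exact integral_ofReal
  have hre : ∀ y : ℝ, (Fc R θ₀ y).re
      = Real.exp (-(A * Real.cosh y)) * Real.cos (β * Real.sinh y) := by
    intro y
    have hz : (-(R : ℂ) * Complex.cosh ((y : ℂ) + (θ₀ : ℂ) * Complex.I))
        = ((-(A * Real.cosh y) : ℝ) : ℂ) + ((-(β * Real.sinh y) : ℝ) : ℂ) * Complex.I := by
      rw [cosh_add_mul_I, hcos, hsin]
      push_cast
      have hRne : (R : ℂ) ≠ 0 := by exact_mod_cast hR.ne'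
      field_simp
      ring
    rw [Fc, hz, Complex.exp_re]
    simp only [Complex.add_re, Complex.ofReal_re, Complex.mul_re, Complex.I_re, Complex.I_im,
      Complex.ofReal_im, Complex.add_im, Complex.mul_im]
    rw [show -(A * Real.cosh y) + (-(β * Real.sinh y) * 0 - 0 * 1) = -(A * Real.cosh y) by ring,
      show (0 : ℝ) + (-(β * Real.sinh y) * 1 + 0 * 0) = -(β * Real.sinh y) by ring,
      Real.cos_neg]
  have hcosθ₀ : 0 < Real.cos θ₀ := by rw [hcos]; positivity
  have hint : Integrable (fun y : ℝ => Fc R θ₀ y) := integrable_Fc hR hcosθ₀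
  calc ∫ y : ℝ, Real.exp (-(A * Real.cosh y)) * Real.cos (β * Real.sinh y)
      = ∫ y : ℝ, (Fc R θ₀ y).re := by
        congr 1; funext y; rw [hre y]
    _ = (∫ y : ℝ, Fc R θ₀ y).re := Complex.reCLM.integral_comp_comm hint
    _ = ((∫ y : ℝ, Real.exp (-(R * Real.cosh y)) : ℝ) : ℂ).re := by rw [hconst, hI0]
    _ = ∫ y : ℝ, Real.exp (-(R * Real.cosh y)) := Complex.ofReal_re _


theorem stmt_18 {Ω : Type*} [MeasurableSpace Ω] (P : Measure Ω) [IsProbabilityMeasure P]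
    (μ : ℝ) (hμ : 0 < μ) (lam ξ : ℝ) (hlam : 0 ≤ lam) (hlamξ : lam ≤ |ξ|)
    (z : Ω → ℝ) (hz : Measurable z)
    (hlaw : P.map z = volume.withDensity
      (fun y => ENNReal.ofReal ((2 * K0 μ)⁻¹ * Real.exp (-μ * Real.cosh y)))) :
    ∫ ω, Real.exp (-lam * Real.exp (z ω) - ξ ^ 2 / (2 * μ) * Real.exp (z ω)) ∂P
      = ∫ ω, Real.exp (-lam * Real.cosh (z ω)) * Real.cos (Real.sqrt (ξ ^ 2 - lam ^ 2) * Real.sinh (z ω)) ∂P := by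
  have hK0 : 0 ≤ K0 μ :=
    mul_nonneg (by norm_num) (integral_nonneg fun x => (Real.exp_pos _).le)
  have hwnn : ∀ y : ℝ, 0 ≤ (2 * K0 μ)⁻¹ * Real.exp (-μ * Real.cosh y) := fun y =>
    mul_nonneg (inv_nonneg.2 (by linarith)) (Real.exp_pos _).le
  set w : ℝ → ℝ≥0 := fun y => ((2 * K0 μ)⁻¹ * Real.exp (-μ * Real.cosh y)).toNNReal with hw
  have hwmeas : Measurable w := by
    apply Measurable.real_toNNReal
    fun_prop
  have hdens : (fun y => ENNReal.ofReal ((2 * K0 μ)⁻¹ * Real.exp (-μ * Real.cosh y)))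
      = fun y => (w y : ℝ≥0∞) := rfl
  set f₁ : ℝ → ℝ := fun y => Real.exp (-lam * Real.exp y - ξ ^ 2 / (2 * μ) * Real.exp y)
    with hf₁
  set f₂ : ℝ → ℝ := fun y =>
    Real.exp (-lam * Real.cosh y) * Real.cos (Real.sqrt (ξ ^ 2 - lam ^ 2) * Real.sinh y)
    with hf₂
  have hf₁c : Continuous f₁ := by rw [hf₁]; fun_prop
  have hf₂c : Continuous f₂ := by rw [hf₂]; fun_prop
  have e₁ : ∫ ω, f₁ (z ω) ∂P = ∫ y : ℝ, w y • f₁ y := by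
    rw [← MeasureTheory.integral_map hz.aemeasurable hf₁c.aestronglyMeasurable, hlaw, hdens,
      integral_withDensity_eq_integral_smul hwmeas]
  have e₂ : ∫ ω, f₂ (z ω) ∂P = ∫ y : ℝ, w y • f₂ y := by
    rw [← MeasureTheory.integral_map hz.aemeasurable hf₂c.aestronglyMeasurable, hlaw, hdens,
      integral_withDensity_eq_integral_smul hwmeas]
  have hwe : ∀ y : ℝ, (w y : ℝ) = (2 * K0 μ)⁻¹ * Real.exp (-μ * Real.cosh y) := fun y =>
    Real.coe_toNNReal _ (hwnn y)
  -- the key analytic identity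
  have key : ∫ y : ℝ, Real.exp (-μ * Real.cosh y) * f₁ y
      = ∫ y : ℝ, Real.exp (-μ * Real.cosh y) * f₂ y := by
    set β : ℝ := Real.sqrt (ξ ^ 2 - lam ^ 2) with hβdef
    have hlamsq : lam ^ 2 ≤ ξ ^ 2 := by
      have h1 : lam ^ 2 ≤ |ξ| ^ 2 := by
        apply pow_le_pow_left₀ hlam hlamξ
      rwa [sq_abs] at h1
    have hβsq : β ^ 2 = ξ ^ 2 - lam ^ 2 := Real.sq_sqrt (by linarith)
    have hβ : 0 ≤ β := Real.sqrt_nonneg _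
    set A : ℝ := μ + lam with hAdef
    have hA : 0 < A := by positivity
    set c : ℝ := μ / 2 + lam + ξ ^ 2 / (2 * μ) with hcdef
    set d : ℝ := μ / 2 with hddef
    have hc : 0 < c := by positivity
    have hd : 0 < d := by positivity
    have h4cd : 2 * Real.sqrt (c * d) = Real.sqrt (A ^ 2 + β ^ 2) := by
      rw [show (2:ℝ) = Real.sqrt 4 by
          rw [show (4:ℝ) = 2^2 by norm_num, Real.sqrt_sq (by norm_num : (0:ℝ) ≤ 2)],
        ← Real.sqrt_mul (by norm_num) (c * d)]
      congr 1
      rw [hβsq, hcdef, hddef, hAdef]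
      field_simp
      ring
    have hp₁ : ∀ y : ℝ, Real.exp (-μ * Real.cosh y) * f₁ y
        = Real.exp (-(c * Real.exp y + d * Real.exp (-y))) := by
      intro y
      rw [hf₁, ← Real.exp_add]
      congr 1
      rw [Real.cosh_eq, hcdef, hddef]
      field_simp
      ring
    have hp₂ : ∀ y : ℝ, Real.exp (-μ * Real.cosh y) * f₂ y
        = Real.exp (-(A * Real.cosh y)) * Real.cos (β * Real.sinh y) := by
      intro y
      rw [hf₂, ← mul_assoc, ← Real.exp_add]
      congr 2
      rw [hAdef]; ring
    calc ∫ y : ℝ, Real.exp (-μ * Real.cosh y) * f₁ y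
        = ∫ y : ℝ, Real.exp (-(c * Real.exp y + d * Real.exp (-y))) := by
          congr 1; funext y; exact hp₁ y
      _ = ∫ y : ℝ, Real.exp (-(2 * Real.sqrt (c * d) * Real.cosh y)) :=
          translation_lemma hc hd
      _ = ∫ y : ℝ, Real.exp (-(Real.sqrt (A ^ 2 + β ^ 2) * Real.cosh y)) := by rw [h4cd]
      _ = ∫ y : ℝ, Real.exp (-(A * Real.cosh y)) * Real.cos (β * Real.sinh y) :=
          (rotation_lemma hA hβ).symm
      _ = ∫ y : ℝ, Real.exp (-μ * Real.cosh y) * f₂ y := by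
          congr 1; funext y; exact (hp₂ y).symm
  have final : ∫ y : ℝ, w y • f₁ y = ∫ y : ℝ, w y • f₂ y := by
    have hs : ∀ (f : ℝ → ℝ) (y : ℝ), w y • f y
        = (2 * K0 μ)⁻¹ * (Real.exp (-μ * Real.cosh y) * f y) := by
      intro f y
      rw [NNReal.smul_def, smul_eq_mul, hwe y, mul_assoc]
    simp_rw [hs f₁, hs f₂, MeasureTheory.integral_const_mul, key]
  exact e₁.trans (final.trans e₂.symm)
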